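/- There is no finite abelian non-cyclic group G for which some window f ∈ ℂ^G generates a full spark Gabor frame: for every finite abelian non-cyclic G and every f ∈ ℂ^G, the Gabor frame (f, G × Ĝ) is spark deficient. -/

import Mathlib

/-- The time–frequency shift `π(x,ξ) f = M_ξ T_x f` of a window `f`. -/
def timeFreqShift {G : Type*} [AddCommGroup G] (p : G × AddChar G ℂ)
    (f : G → ℂ) : G → ℂ :=
  fun g => p.2 g * f (g - p.1)

/-- The Gabor system `(f, G × Ĝ)` is full spark: every `|G|` of its vectors are
linearly independent. -/
def GaborFullSpark {G : Type*} [AddCommGroup G] [Fintype G] (f : G → ℂ) : Prop :=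
  ∀ Λ : Finset (G × AddChar G ℂ), Λ.card = Fintype.card G →
    LinearIndependent ℂ (fun p : Λ => timeFreqShift (p : G × AddChar G ℂ) f)

open Finset Function

lemma exists_prime_torsion {G : Type*} [AddCommGroup G] [Fintype G] (hG : ¬ IsAddCyclic G) :
    ∃ p : ℕ, p.Prime ∧ ∃ ι : (ZMod p × ZMod p) →+ G, Function.Injective ι := by
  classical
  have hbig : ∃ p : ℕ, p.Prime ∧
      p < (Finset.univ.filter fun a : G => p • a = 0).card := by
    by_contra hno
    push_neg at hno
    apply hG
    apply isAddCyclic_of_card_nsmul_eq_zero_le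
    intro m hm
    induction m using Nat.strong_induction_on with
    | _ m ih =>
      rcases eq_or_lt_of_le (show 1 ≤ m from hm) with h1 | h2
      · rw [← h1]
        have : (Finset.univ.filter fun a : G => 1 • a = 0) = {0} := by
          ext a; simp
        rw [this]; simp
      · set q := m.minFac with hq
        have hqp : q.Prime := Nat.minFac_prime (by omega)
        set k := m / q with hk
        have hdvd : q ∣ m := m.minFac_dvd
        have hpk : m = k * q := (Nat.div_mul_cancel hdvd).symm
        have hk0 : 0 < k := Nat.div_pos (Nat.minFac_le (by omega)) hqp.pos
        have hklt : k < m := Nat.div_lt_self (by omega) hqp.one_lt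
        set s := Finset.univ.filter fun a : G => m • a = 0 with hs
        have hfib : ∀ b ∈ s.image (fun a => k • a),
            (s.filter fun a => k • a = b).card ≤ k := by
          intro b hb
          obtain ⟨a₀, ha₀s, ha₀⟩ := Finset.mem_image.1 hb
          have : (s.filter fun a => k • a = b).card ≤
              (Finset.univ.filter fun a : G => k • a = 0).card := by
            apply Finset.card_le_card_of_injOn (fun a => a - a₀)
            · intro a ha
              simp only [Finset.mem_coe] at ha ⊢
              rw [Finset.mem_filter] at ha ⊢
              refine ⟨Finset.mem_univ _, ?_⟩
              rw [smul_sub, ha.2, ha₀, sub_self]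
            · intro a _ b' _ hab
              simpa using sub_left_injective hab
          exact this.trans (ih k hklt (by omega))
        have himgsub : s.image (fun a => k • a) ⊆
            Finset.univ.filter fun a : G => q • a = 0 := by
          intro b hb
          obtain ⟨a, has, rfl⟩ := Finset.mem_image.1 hb
          rw [Finset.mem_filter] at has ⊢
          refine ⟨Finset.mem_univ _, ?_⟩
          rw [smul_smul, mul_comm, ← hpk, has.2]
        calc s.card ≤ k * (s.image (fun a => k • a)).card :=
              Finset.card_le_mul_card_image _ _ hfib
          _ ≤ k * q := by
              have := (Finset.card_le_card himgsub).trans (hno q hqp)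
              exact Nat.mul_le_mul_left k this
          _ = m := hpk.symm
  obtain ⟨p, hp, hcard⟩ := hbig
  haveI : Fact p.Prime := ⟨hp⟩
  let φp : G →+ G := AddMonoidHom.mk' (fun x => p • x) (fun a b => smul_add p a b)
  set T : AddSubgroup G := φp.ker with hT
  have hmemT : ∀ x : G, x ∈ T ↔ p • x = 0 := fun x => Iff.rfl
  have hcardT : p < Fintype.card T := by
    have : Fintype.card T = (Finset.univ.filter fun a : G => p • a = 0).card := by
      rw [Fintype.card_subtype]
      congr 1
      ext a
      simp [T, φp, AddMonoidHom.mem_ker]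
    omega
  haveI : Module (ZMod p) T := AddCommGroup.zmodModule (by
    rintro ⟨x, hx⟩
    ext
    push_cast
    exact (hmemT x).1 hx)
  haveI : Nontrivial T := Fintype.one_lt_card_iff_nontrivial.1 (lt_trans hp.one_lt hcardT)
  obtain ⟨x, hx⟩ := exists_ne (0 : T)
  obtain ⟨y, hy⟩ : ∃ y : T, y ∉ Submodule.span (ZMod p) {x} := by
    by_contra h
    push_neg at h
    have hsurj : Function.Surjective (fun c : ZMod p => c • x) := by
      intro z
      rcases Submodule.mem_span_singleton.1 (h z) with ⟨c, hc⟩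
      exact ⟨c, hc⟩
    have := Fintype.card_le_of_surjective _ hsurj
    rw [ZMod.card] at this
    omega
  have hlin : ∀ a b : ZMod p, a • x + b • y = 0 → a = 0 ∧ b = 0 := by
    intro a b hab
    have hb : b = 0 := by
      by_contra hb
      apply hy
      rw [Submodule.mem_span_singleton]
      refine ⟨-(b⁻¹ * a), ?_⟩
      have h1 : b • y = -(a • x) := by
        rw [add_comm] at hab
        exact add_eq_zero_iff_eq_neg.1 hab
      calc (-(b⁻¹ * a)) • x = b⁻¹ • (-(a • x)) := by
            rw [neg_smul, mul_smul, smul_neg]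
        _ = b⁻¹ • (b • y) := by rw [h1]
        _ = y := by rw [smul_smul, inv_mul_cancel₀ hb, one_smul]
    have ha : a = 0 := by
      by_contra ha
      apply hx
      have h2 : a • x = 0 := by
        rw [hb, zero_smul, add_zero] at hab
        exact hab
      calc x = a⁻¹ • (a • x) := by rw [smul_smul, inv_mul_cancel₀ ha, one_smul]
        _ = 0 := by rw [h2, smul_zero]
    exact ⟨ha, hb⟩
  let ι₀ : ZMod p × ZMod p →+ T := AddMonoidHom.mk'
    (fun ab => ab.1 • x + ab.2 • y)
    (by
      rintro ⟨a, b⟩ ⟨c, d⟩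
      simp only [Prod.fst_add, Prod.snd_add, add_smul]
      abel)
  have hι₀ : Function.Injective ι₀ := by
    rw [injective_iff_map_eq_zero]
    rintro ⟨a, b⟩ hab
    obtain ⟨ha, hb⟩ := hlin a b hab
    simp [Prod.ext_iff, ha, hb]
  exact ⟨p, hp, T.subtype.comp ι₀, (AddSubgroup.subtype_injective T).comp hι₀⟩


lemma base_dependence (p : ℕ) [Fact p.Prime] (e₀ : AddChar (ZMod p) ℂ) (he₀ : e₀ 1 ≠ 1)
    (w : ZMod p × ZMod p → ℂ) :
    ∃ (E : ZMod p × ZMod p → ℂ) (E' : ℂ), (E ≠ 0 ∨ E' ≠ 0) ∧ E 0 = 0 ∧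
      ∀ b t : ZMod p,
        (∑ jc : ZMod p × ZMod p, E jc * e₀ (jc.2 * t) * w (b, t - jc.1))
          + E' * e₀ b * w (b, t) = 0 := by
  classical
  have he₀' : e₀ ≠ 1 := fun h => he₀ (by rw [h]; rfl)
  have he₀0 : e₀ ≠ 0 := he₀'
  have hsum0 : ∑ c : ZMod p, e₀ c = 0 := AddChar.sum_eq_zero_iff_ne_zero.2 he₀0
  have horth : ∀ z : ZMod p, z ≠ 0 → ∑ c : ZMod p, e₀ (z * c) = 0 := by
    intro z hz
    have : ∑ c : ZMod p, e₀ (z * c) = ∑ c : ZMod p, e₀ c := by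
      apply Fintype.sum_bijective (fun c => z * c)
      · exact (Equiv.mulLeft₀ z hz).bijective
      · intro c; rfl
    rw [this, hsum0]
  have hdelta : ∀ z : ZMod p, ∑ c : ZMod p, e₀ (z * c) = if z = 0 then (p : ℂ) else 0 := by
    intro z
    split_ifs with h
    · subst h
      simp [ZMod.card]
    · exact horth z h
  set F : Matrix (ZMod p) (ZMod p) ℂ := Matrix.of fun t b => w (b, t) with hF
  obtain ⟨A, E', hne, htr, hmain⟩ :
      ∃ (A : Matrix (ZMod p) (ZMod p) ℂ) (E' : ℂ), (A ≠ 0 ∨ E' ≠ 0) ∧ A.trace = 0 ∧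
        ∀ t b, (A * F) t b + E' * (F t b * e₀ b) = 0 := by
    by_cases hdet : IsUnit F.det
    · refine ⟨F * (Matrix.diagonal fun b => e₀ b) * F⁻¹, -1, Or.inr (by norm_num), ?_, ?_⟩
      · have h1 : (F * Matrix.diagonal (fun b => e₀ b) * F⁻¹).trace
            = (Matrix.diagonal fun b : ZMod p => e₀ b).trace := by
          rw [Matrix.trace_mul_comm, ← Matrix.mul_assoc, Matrix.nonsing_inv_mul F hdet,
            Matrix.one_mul]
        rw [h1, Matrix.trace_diagonal]
        simpa using hsum0
      · intro t b
        have h2 : F * Matrix.diagonal (fun b => e₀ b) * F⁻¹ * F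
            = F * Matrix.diagonal fun b => e₀ b := by
          rw [Matrix.mul_assoc (F * _), Matrix.nonsing_inv_mul F hdet, Matrix.mul_one]
        rw [h2, Matrix.mul_diagonal]
        ring
    · have hdet0 : F.det = 0 := by
        by_contra h
        exact hdet (isUnit_iff_ne_zero.2 h)
      obtain ⟨v, hv0, hvF⟩ := Matrix.exists_vecMul_eq_zero_iff.2 hdet0
      obtain ⟨s₁, hs₁⟩ : ∃ s, v s ≠ 0 := Function.ne_iff.1 hv0
      obtain ⟨s₂, hs₂⟩ := exists_ne s₁
      set u : ZMod p → ℂ := fun s => if s = s₁ then v s₂ else if s = s₂ then -v s₁ else 0 with hu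
      have hAF : Matrix.vecMulVec u v * F = 0 := by
        ext s b'
        rw [Matrix.mul_apply, Matrix.zero_apply]
        have hv' : ∑ t, v t * F t b' = 0 := by
          have := congrFun hvF b'
          simpa [Matrix.vecMul, dotProduct] using this
        calc ∑ t, Matrix.vecMulVec u v s t * F t b'
            = u s * ∑ t, v t * F t b' := by
              rw [Finset.mul_sum]
              congr 1
              ext t
              rw [Matrix.vecMulVec_apply]
              ring
          _ = 0 := by rw [hv', mul_zero]
      refine ⟨Matrix.vecMulVec u v, 0, Or.inl ?_, ?_, ?_⟩
      · intro h
        have h3 := congrFun (congrFun h s₂) s₁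
        rw [Matrix.vecMulVec_apply, Matrix.zero_apply] at h3
        have hus₂ : u s₂ = -v s₁ := by simp [hu, hs₂]
        rw [hus₂] at h3
        exact hs₁ (by
          have := mul_eq_zero.1 h3
          rcases this with h4 | h4
          · exact neg_eq_zero.1 h4
          · exact h4)
      · have hdiag : ∀ s, (Matrix.vecMulVec u v).diag s
            = (if s = s₁ then v s₂ * v s₁ else 0) + (if s = s₂ then -(v s₁ * v s₂) else 0) := by
          intro s
          show u s * v s = _
          by_cases h1 : s = s₁
          · subst h1
            have : s ≠ s₂ := fun h => hs₂ h.symm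
            simp [hu, this]
          · by_cases h2 : s = s₂
            · subst h2
              simp [hu, h1]
            · simp [hu, h1, h2]
        show ∑ s, (Matrix.vecMulVec u v).diag s = 0
        rw [Finset.sum_congr rfl (fun s _ => hdiag s), Finset.sum_add_distrib,
          Finset.sum_ite_eq' univ s₁, Finset.sum_ite_eq' univ s₂]
        simp
        ring
      · intro t b
        rw [hAF]
        simp
  set E : ZMod p × ZMod p → ℂ :=
    fun jc => (p : ℂ)⁻¹ * ∑ s : ZMod p, e₀ (-(jc.2 * s)) * A s (s - jc.1) with hE
  have hp0 : (p : ℂ) ≠ 0 := Nat.cast_ne_zero.2 (Fact.out : p.Prime).pos.ne'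
  have hinv : ∀ j t : ZMod p, ∑ c : ZMod p, E (j, c) * e₀ (c * t) = A t (t - j) := by
    intro j t
    have key : ∀ c s : ZMod p,
        (e₀ (-(c * s)) * A s (s - j)) * e₀ (c * t) = A s (s - j) * e₀ ((t - s) * c) := by
      intro c s
      have h5 : e₀ (-(c * s)) * e₀ (c * t) = e₀ ((t - s) * c) := by
        rw [← AddChar.map_add_eq_mul]
        congr 1
        ring
      calc (e₀ (-(c * s)) * A s (s - j)) * e₀ (c * t)
          = (e₀ (-(c * s)) * e₀ (c * t)) * A s (s - j) := by ring
        _ = A s (s - j) * e₀ ((t - s) * c) := by rw [h5]; ring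
    calc ∑ c : ZMod p, E (j, c) * e₀ (c * t)
        = (p : ℂ)⁻¹ * ∑ c : ZMod p, ∑ s : ZMod p,
            (e₀ (-(c * s)) * A s (s - j)) * e₀ (c * t) := by
          rw [Finset.mul_sum]
          apply Finset.sum_congr rfl
          intro c _
          rw [hE]
          simp only
          rw [mul_assoc, Finset.sum_mul]
      _ = (p : ℂ)⁻¹ * ∑ s : ZMod p, A s (s - j) * ∑ c : ZMod p, e₀ ((t - s) * c) := by
          congr 1
          rw [Finset.sum_comm]
          apply Finset.sum_congr rfl
          intro s _
          rw [Finset.mul_sum]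
          apply Finset.sum_congr rfl
          intro c _
          exact key c s
      _ = A t (t - j) := by
          have h6 : ∀ s : ZMod p, A s (s - j) * ∑ c : ZMod p, e₀ ((t - s) * c)
              = if s = t then A t (t - j) * (p : ℂ) else 0 := by
            intro s
            rw [hdelta (t - s)]
            by_cases h : s = t
            · subst h
              simp
            · have h7 : t - s ≠ 0 := sub_ne_zero.2 (Ne.symm h)
              simp [h7, h]
          rw [Finset.sum_congr rfl (fun s _ => h6 s), Finset.sum_ite_eq' univ t]
          simp
          field_simp
  refine ⟨E, E', ?_, ?_, ?_⟩
  · rcases hne with hA | hE'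
    · left
      intro hE0
      apply hA
      ext t t'
      have h8 := hinv (t - t') t
      rw [sub_sub_cancel] at h8
      rw [Matrix.zero_apply, ← h8]
      apply Finset.sum_eq_zero
      intro c _
      rw [show E (t - t', c) = 0 from congrFun hE0 _]
      ring
    · right
      exact hE'
  · have h9 : E 0 = (p : ℂ)⁻¹ * ∑ s : ZMod p, A s s := by
      rw [hE]
      simp only [Prod.fst_zero, Prod.snd_zero, zero_mul, neg_zero, AddChar.map_zero_eq_one,
        one_mul, sub_zero]
    rw [h9]
    have h10 : ∑ s : ZMod p, A s s = 0 := htr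
    rw [h10, mul_zero]
  · intro b t
    have hsum : ∑ jc : ZMod p × ZMod p, E jc * e₀ (jc.2 * t) * w (b, t - jc.1)
        = ∑ j : ZMod p, A t (t - j) * w (b, t - j) := by
      rw [Fintype.sum_prod_type]
      apply Finset.sum_congr rfl
      intro j _
      calc ∑ c : ZMod p, E (j, c) * e₀ (c * t) * w (b, t - j)
          = (∑ c : ZMod p, E (j, c) * e₀ (c * t)) * w (b, t - j) := by
            rw [Finset.sum_mul]
        _ = A t (t - j) * w (b, t - j) := by rw [hinv]
    have hre : ∑ j : ZMod p, A t (t - j) * w (b, t - j) = (A * F) t b := by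
      rw [Matrix.mul_apply]
      apply Fintype.sum_equiv (Equiv.subLeft t)
      intro j
      rfl
    rw [hsum, hre]
    have h11 := hmain t b
    have h12 : F t b = w (b, t) := rfl
    rw [h12] at h11
    calc (A * F) t b + E' * e₀ b * w (b, t)
        = (A * F) t b + E' * (w (b, t) * e₀ b) := by ring
      _ = 0 := h11


lemma restrict_char_surjective {G : Type*} [AddCommGroup G] [Fintype G]
    {V : Type*} [AddCommGroup V] [Fintype V]
    (ι : V →+ G) (hι : Function.Injective ι) (χ : AddChar V ℂ) :
    ∃ ψ : AddChar G ℂ, ∀ v, ψ (ι v) = χ v := by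
  classical
  set res : AddChar G ℂ →* AddChar V ℂ :=
    MonoidHom.mk' (fun ψ => ψ.compAddMonoidHom ι)
      (fun ψ₁ ψ₂ => by ext v; simp [AddChar.mul_apply]) with hres
  suffices hsurj : Function.Surjective res by
    obtain ⟨ψ, hψ⟩ := hsurj χ
    refine ⟨ψ, fun v => ?_⟩
    have := DFunLike.congr_fun hψ v
    simpa [hres] using this
  set H : AddSubgroup G := ι.range with hH
  have hker : ∀ ψ : AddChar G ℂ, ψ ∈ res.ker → ∀ h ∈ H, ψ h = 1 := by
    intro ψ hψ h hh
    obtain ⟨v, rfl⟩ := hh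
    have := DFunLike.congr_fun (MonoidHom.mem_ker.1 hψ) v
    simpa [hres] using this
  -- lift elements of the kernel to characters of the quotient
  have hlift : ∀ ψ : res.ker, ∃ ψQ : AddChar (G ⧸ H) ℂ,
      ∀ g : G, ψQ (QuotientAddGroup.mk g) = (ψ : AddChar G ℂ) g := by
    intro ψ
    refine ⟨{
      toFun := fun q => Quotient.liftOn' q (ψ : AddChar G ℂ) (fun a b hab => ?_)
      map_zero_eq_one' := ?_
      map_add_eq_mul' := ?_ }, fun g => rfl⟩
    · have hab' : -a + b ∈ H := QuotientAddGroup.leftRel_apply.1 hab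
      have h1 : (ψ : AddChar G ℂ) b = (ψ : AddChar G ℂ) a * (ψ : AddChar G ℂ) (-a + b) := by
        rw [← AddChar.map_add_eq_mul, add_neg_cancel_left]
      rw [h1, hker _ ψ.2 _ hab', mul_one]
    · exact AddChar.map_zero_eq_one (ψ : AddChar G ℂ)
    · intro q r
      refine Quotient.inductionOn₂' q r (fun a b => ?_)
      exact AddChar.map_add_eq_mul (ψ : AddChar G ℂ) a b
  choose liftQ hliftQ using hlift
  have hliftinj : Function.Injective liftQ := by
    intro ψ₁ ψ₂ h
    apply Subtype.ext
    ext g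
    rw [← hliftQ ψ₁ g, ← hliftQ ψ₂ g, h]
  -- cardinalities
  have hcardH : Nat.card H = Nat.card V := by
    refine (Nat.card_congr ?_).symm
    exact (AddMonoidHom.ofInjective hι).toEquiv
  have h1 : Nat.card (AddChar G ℂ) = Nat.card (G ⧸ H) * Nat.card V := by
    rw [Nat.card_eq_fintype_card, AddChar.card_eq, ← hcardH,
      ← AddSubgroup.card_eq_card_quotient_mul_card_addSubgroup H, Nat.card_eq_fintype_card]
  have hkerle : Nat.card res.ker ≤ Nat.card (G ⧸ H) := by
    calc Nat.card res.ker ≤ Nat.card (AddChar (G ⧸ H) ℂ) :=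
          Nat.card_le_card_of_injective liftQ hliftinj
      _ = Nat.card (G ⧸ H) := by
          rw [Nat.card_eq_fintype_card, AddChar.card_eq, Nat.card_eq_fintype_card]
  have h3 : Nat.card res.range * Nat.card res.ker = Nat.card (AddChar G ℂ) := by
    rw [Subgroup.card_eq_card_quotient_mul_card_subgroup res.ker]
    congr 1
    exact (Nat.card_congr (QuotientGroup.quotientKerEquivRange res).toEquiv).symm
  have hkpos : 0 < Nat.card res.ker := Nat.card_pos
  have h4 : Nat.card (AddChar V ℂ) ≤ Nat.card res.range := by
    have hV : Nat.card (AddChar V ℂ) = Nat.card V := by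
      rw [Nat.card_eq_fintype_card, AddChar.card_eq, Nat.card_eq_fintype_card]
    rw [hV]
    by_contra hlt
    push_neg at hlt
    have hQpos : 0 < Nat.card (G ⧸ H) := Nat.card_pos
    have : Nat.card res.range * Nat.card res.ker < Nat.card V * Nat.card (G ⧸ H) :=
      Nat.mul_lt_mul_of_lt_of_le hlt hkerle hQpos
    rw [h3, h1, mul_comm (Nat.card (G ⧸ H))] at this
    omega
  have h5 : res.range = ⊤ := Subgroup.eq_top_of_le_card _ h4
  exact MonoidHom.range_eq_top.1 h5

/-- For every finite abelian non-cyclic group `G` and every window `f : G → ℂ`,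
the Gabor frame `(f, G × Ĝ)` is spark deficient. -/
theorem no_fullSpark_gabor_noncyclic {G : Type*} [AddCommGroup G] [Fintype G]
    (hG : ¬ IsAddCyclic G) (f : G → ℂ) : ¬ GaborFullSpark f := by
  classical
  intro hFS
  obtain ⟨p, hp, ι, hι⟩ := exists_prime_torsion hG
  haveI : Fact p.Prime := ⟨hp⟩
  obtain ⟨e₀, he₀⟩ : ∃ e₀ : AddChar (ZMod p) ℂ, e₀ 1 ≠ 1 :=
    AddChar.exists_apply_ne_zero.2 one_ne_zero
  have hunit : ∀ z : ZMod p, e₀ z ≠ 0 := by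
    intro z h
    have h1 : e₀ z * e₀ (-z) = 1 := by
      rw [← AddChar.map_add_eq_mul, add_neg_cancel, AddChar.map_zero_eq_one]
    rw [h, zero_mul] at h1
    exact zero_ne_one h1
  have hker0 : ∀ z : ZMod p, e₀ z = 1 → z = 0 := by
    intro z hz
    by_contra hzne
    apply he₀
    have h3 : ∀ y : ZMod p, e₀ (y * z) = 1 := by
      intro y
      have h4 : y * z = y.val • z := by
        rw [nsmul_eq_mul]
        norm_cast
        rw [ZMod.natCast_val, ZMod.cast_id]
      rw [h4, AddChar.map_nsmul_eq_pow, hz, one_pow]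
    have h2 : (1 : ZMod p) = z⁻¹ * z := (inv_mul_cancel₀ hzne).symm
    rw [h2]
    exact h3 z⁻¹
  have hext : ∀ χ : AddChar (ZMod p × ZMod p) ℂ, ∃ ψ : AddChar G ℂ, ∀ v, ψ (ι v) = χ v :=
    restrict_char_surjective ι hι
  let χc : ZMod p → AddChar (ZMod p × ZMod p) ℂ := fun c =>
    e₀.compAddMonoidHom ((AddMonoidHom.mulLeft c).comp (AddMonoidHom.snd (ZMod p) (ZMod p)))
  let ηV : AddChar (ZMod p × ZMod p) ℂ :=
    e₀.compAddMonoidHom (AddMonoidHom.fst (ZMod p) (ZMod p))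
  choose ξ hξ using fun c => hext (χc c)
  obtain ⟨ηG, hηG⟩ := hext ηV
  have hξ' : ∀ c v, ξ c (ι v) = e₀ (c * v.2) := fun c v => hξ c v
  have hηG' : ∀ v, ηG (ι v) = e₀ v.1 := fun v => hηG v
  set H : AddSubgroup G := ι.range with hH
  letI : Fintype (G ⧸ H) := Fintype.ofFinite _
  obtain ⟨E, E', hEne, hE0, hmainV⟩ := base_dependence p e₀ he₀ (fun v => f (ι v))
  let τ : ZMod p × ZMod p → AddChar G ℂ := fun jc => if jc = 0 then ηG else ξ jc.2
  let mkQ : G →+ G ⧸ H := QuotientAddGroup.mk' H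
  let Θ : (ZMod p × ZMod p) × AddChar (G ⧸ H) ℂ → G × AddChar G ℂ :=
    fun iψ => (ι (0, iψ.1.1), τ iψ.1 * iψ.2.compAddMonoidHom mkQ)
  have hmkι : ∀ v, mkQ (ι v) = 0 := by
    intro v
    rw [QuotientAddGroup.mk'_apply, QuotientAddGroup.eq_zero_iff]
    exact ⟨v, rfl⟩
  have hτι : ∀ jc v, τ jc (ι v) = if jc = 0 then e₀ v.1 else e₀ (jc.2 * v.2) := by
    intro jc v
    by_cases h : jc = 0
    · simp only [τ, if_pos h]
      exact hηG' v
    · simp only [τ, if_neg h]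
      exact hξ' jc.2 v
  have hΘinj : Function.Injective Θ := by
    rintro ⟨jc₁, ψ₁⟩ ⟨jc₂, ψ₂⟩ h
    have h1 : ι ((0 : ZMod p), jc₁.1) = ι (0, jc₂.1) := congrArg Prod.fst h
    have h2 : τ jc₁ * ψ₁.compAddMonoidHom mkQ = τ jc₂ * ψ₂.compAddMonoidHom mkQ :=
      congrArg Prod.snd h
    have hj : jc₁.1 = jc₂.1 := congrArg Prod.snd (hι h1)
    have hres : ∀ v, τ jc₁ (ι v) = τ jc₂ (ι v) := by
      intro v
      have h3 := DFunLike.congr_fun h2 (ι v)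
      rw [AddChar.mul_apply, AddChar.mul_apply, AddChar.compAddMonoidHom_apply,
        AddChar.compAddMonoidHom_apply, hmkι] at h3
      simpa using h3
    have hjc : jc₁ = jc₂ := by
      by_cases hz1 : jc₁ = 0
      · by_cases hz2 : jc₂ = 0
        · rw [hz1, hz2]
        · exfalso
          have h4 := hres (1, 0)
          rw [hτι, hτι, if_pos hz1, if_neg hz2] at h4
          simp only [mul_zero, AddChar.map_zero_eq_one] at h4
          exact he₀ h4
      · by_cases hz2 : jc₂ = 0
        · exfalso
          have h4 := hres (1, 0)
          rw [hτι, hτι, if_neg hz1, if_pos hz2] at h4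
          simp only [mul_zero, AddChar.map_zero_eq_one] at h4
          exact he₀ h4.symm
        · have h4 := hres (0, 1)
          rw [hτι, hτι, if_neg hz1, if_neg hz2] at h4
          simp only [mul_one] at h4
          have h5 : jc₁.2 = jc₂.2 := by
            have h6 : e₀ (jc₁.2 - jc₂.2) * e₀ jc₂.2 = 1 * e₀ jc₂.2 := by
              rw [← AddChar.map_add_eq_mul, sub_add_cancel, one_mul, h4]
            have h7 := mul_right_cancel₀ (hunit jc₂.2) h6
            exact sub_eq_zero.1 (hker0 _ h7)
          exact Prod.ext hj h5
    have h8 : ψ₁.compAddMonoidHom mkQ = ψ₂.compAddMonoidHom mkQ := by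
      rw [hjc] at h2
      exact mul_left_cancel h2
    have h9 : ψ₁ = ψ₂ :=
      AddChar.compAddMonoidHom_injective_left mkQ (QuotientAddGroup.mk'_surjective H) h8
    rw [Prod.ext_iff]
    exact ⟨hjc, h9⟩
  set Λ : Finset (G × AddChar G ℂ) := Finset.image Θ Finset.univ with hΛ
  have hcardΛ : Λ.card = Fintype.card G := by
    rw [hΛ, Finset.card_image_of_injective _ hΘinj, Finset.card_univ,
      Fintype.card_prod, Fintype.card_prod, ZMod.card, AddChar.card_eq]
    have hH2 : Nat.card H = p * p := by
      have h10 := Nat.card_congr (AddMonoidHom.ofInjective hι).toEquiv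
      rw [← h10, Nat.card_eq_fintype_card, Fintype.card_prod, ZMod.card]
    have hGQ := AddSubgroup.card_eq_card_quotient_mul_card_addSubgroup H
    rw [Nat.card_eq_fintype_card, Nat.card_eq_fintype_card, hH2] at hGQ
    rw [hGQ]
    ring
  have hLI := hFS Λ hcardΛ
  let cf : (ZMod p × ZMod p) × AddChar (G ⧸ H) ℂ → ℂ :=
    fun iψ => if iψ.1 = 0 then E' else E iψ.1
  let bigF : G × AddChar G ℂ → (G → ℂ) :=
    fun x => cf (Function.invFun Θ x) • timeFreqShift x f
  let g : {x // x ∈ Λ} → ℂ := fun lam => cf (Function.invFun Θ lam.val)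
  have hbigΘ : ∀ i, bigF (Θ i) = cf i • timeFreqShift (Θ i) f := by
    intro i
    show cf (Function.invFun Θ (Θ i)) • _ = _
    rw [Function.leftInverse_invFun hΘinj i]
  have hanalytic : ∑ i : (ZMod p × ZMod p) × AddChar (G ⧸ H) ℂ,
      cf i • timeFreqShift (Θ i) f = 0 := by
    funext gv
    rw [Finset.sum_apply]
    simp only [Pi.smul_apply, smul_eq_mul, Pi.zero_apply]
    have hTFS : ∀ i : (ZMod p × ZMod p) × AddChar (G ⧸ H) ℂ,
        timeFreqShift (Θ i) f gv
        = τ i.1 gv * i.2 (mkQ gv) * f (gv - ι (0, i.1.1)) := by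
      intro i
      show (τ i.1 * i.2.compAddMonoidHom mkQ) gv * f (gv - ι (0, i.1.1)) = _
      rw [AddChar.mul_apply, AddChar.compAddMonoidHom_apply]
    rw [Fintype.sum_prod_type]
    have hinner : ∀ jc : ZMod p × ZMod p,
        ∑ ψ : AddChar (G ⧸ H) ℂ, cf (jc, ψ) * timeFreqShift (Θ (jc, ψ)) f gv
        = (if jc = 0 then E' else E jc) * τ jc gv * f (gv - ι (0, jc.1)) *
            (if mkQ gv = 0 then (Fintype.card (G ⧸ H) : ℂ) else 0) := by
      intro jc
      rw [← AddChar.sum_apply_eq_ite (mkQ gv), Finset.mul_sum]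
      apply Finset.sum_congr rfl
      intro ψ _
      rw [hTFS (jc, ψ)]
      show (if jc = 0 then E' else E jc) * _ = _
      ring
    rw [Finset.sum_congr rfl (fun jc _ => hinner jc)]
    by_cases hgH : mkQ gv = 0
    · have hmem : gv ∈ H := by
        rwa [QuotientAddGroup.mk'_apply, QuotientAddGroup.eq_zero_iff] at hgH
      obtain ⟨vv, hvv⟩ := hmem
      subst hvv
      simp only [hgH, if_pos]
      have hval : ∀ jc : ZMod p × ZMod p,
          (if jc = 0 then E' else E jc) * τ jc (ι vv) * f (ι vv - ι (0, jc.1)) *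
              (Fintype.card (G ⧸ H) : ℂ)
          = (if jc = 0 then E' * e₀ vv.1 * f (ι (vv.1, vv.2))
              else E jc * e₀ (jc.2 * vv.2) * f (ι (vv.1, vv.2 - jc.1))) *
            (Fintype.card (G ⧸ H) : ℂ) := by
        intro jc
        congr 1
        rw [hτι]
        by_cases h : jc = 0
        · rw [if_pos h, if_pos h, if_pos h, h]
          have : ι vv - ι ((0 : ZMod p), (0 : ZMod p × ZMod p).1) = ι (vv.1, vv.2) := by
            simp only [Prod.fst_zero]
            rw [show ((0 : ZMod p), (0 : ZMod p)) = (0 : ZMod p × ZMod p) from rfl,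
              map_zero, sub_zero]
          rw [this]
        · rw [if_neg h, if_neg h, if_neg h]
          have : ι vv - ι ((0 : ZMod p), jc.1) = ι (vv.1, vv.2 - jc.1) := by
            rw [← map_sub]
            congr 1
            ext <;> simp
          rw [this]
      rw [Finset.sum_congr rfl (fun jc _ => hval jc), ← Finset.sum_mul]
      have hsplit : ∑ jc : ZMod p × ZMod p,
          (if jc = 0 then E' * e₀ vv.1 * f (ι (vv.1, vv.2))
            else E jc * e₀ (jc.2 * vv.2) * f (ι (vv.1, vv.2 - jc.1)))
          = (∑ jc : ZMod p × ZMod p, E jc * e₀ (jc.2 * vv.2) * f (ι (vv.1, vv.2 - jc.1)))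
            + E' * e₀ vv.1 * f (ι (vv.1, vv.2)) := by
        have hterm : ∀ jc : ZMod p × ZMod p,
            (if jc = 0 then E' * e₀ vv.1 * f (ι (vv.1, vv.2))
              else E jc * e₀ (jc.2 * vv.2) * f (ι (vv.1, vv.2 - jc.1)))
            = E jc * e₀ (jc.2 * vv.2) * f (ι (vv.1, vv.2 - jc.1))
              + (if jc = 0 then E' * e₀ vv.1 * f (ι (vv.1, vv.2)) else 0) := by
          intro jc
          by_cases h : jc = 0
          · rw [if_pos h, if_pos h, h, hE0]
            simp
          · rw [if_neg h, if_neg h, add_zero]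
        rw [Finset.sum_congr rfl (fun jc _ => hterm jc), Finset.sum_add_distrib,
          Finset.sum_ite_eq' univ (0 : ZMod p × ZMod p)]
        simp
      rw [hsplit]
      have := hmainV vv.1 vv.2
      rw [this, zero_mul]
    · simp only [hgH, if_neg]
      apply Finset.sum_eq_zero
      intro jc _
      simp [hgH]
  have hnz : ∃ i : {x // x ∈ Λ}, g i ≠ 0 := by
    rcases hEne with hE | hE'
    · obtain ⟨jc₀, hjc₀⟩ := Function.ne_iff.1 hE
      have hne0 : jc₀ ≠ 0 := by
        rintro rfl
        exact hjc₀ hE0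
      refine ⟨⟨Θ (jc₀, 1), by rw [hΛ]; exact Finset.mem_image_of_mem _ (Finset.mem_univ _)⟩, ?_⟩
      show cf (Function.invFun Θ (Θ (jc₀, 1))) ≠ 0
      rw [Function.leftInverse_invFun hΘinj]
      show (if jc₀ = 0 then E' else E jc₀) ≠ 0
      rw [if_neg hne0]
      exact hjc₀
    · refine ⟨⟨Θ (0, 1), by rw [hΛ]; exact Finset.mem_image_of_mem _ (Finset.mem_univ _)⟩, ?_⟩
      show cf (Function.invFun Θ (Θ (0, 1))) ≠ 0
      rw [Function.leftInverse_invFun hΘinj]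
      show (if (0 : ZMod p × ZMod p) = 0 then E' else E 0) ≠ 0
      rw [if_pos rfl]
      exact hE'
  apply Fintype.not_linearIndependent_iff.2 ⟨g, ?_, ?_⟩ hLI
  · calc ∑ i : {x // x ∈ Λ}, g i • timeFreqShift (i : G × AddChar G ℂ) f
        = ∑ x ∈ Λ, bigF x := Finset.sum_coe_sort Λ bigF
      _ = ∑ i : (ZMod p × ZMod p) × AddChar (G ⧸ H) ℂ, bigF (Θ i) := by
          rw [hΛ]
          exact Finset.sum_image (fun a _ b _ hab => hΘinj hab)
      _ = ∑ i : (ZMod p × ZMod p) × AddChar (G ⧸ H) ℂ, cf i • timeFreqShift (Θ i) f :=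
          Finset.sum_congr rfl (fun i _ => hbigΘ i)
      _ = 0 := hanalytic
  · exact hnz
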